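/- For any Z ∈ ℝ^{k×D} with d ≥ min(k, D), the infimum of (1/2)(‖W₁‖_F² + ‖W₂‖_F²) over all factorizations Z = W₂W₁ with W₂ ∈ ℝ^{k×d}, W₁ ∈ ℝ^{d×D} equals the nuclear norm ‖Z‖_*. -/

import Mathlib

open Matrix

/-- Squared Frobenius norm of a real matrix. -/
def frobSq {m n : ℕ} (A : Matrix (Fin m) (Fin n) ℝ) : ℝ :=
  ∑ i, ∑ j, (A i j) ^ 2

/-- Nuclear norm of a real matrix: the sum of its singular values. -/
noncomputable def nuclearNorm {m n : ℕ} (A : Matrix (Fin m) (Fin n) ℝ) : ℝ :=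
  ∑ i, Real.sqrt ((show (Aᵀ * A).IsHermitian by
    simpa using Matrix.isHermitian_conjTranspose_mul_self A).eigenvalues i)

lemma swap_dot {α β : Type*} [Fintype α] [Fintype β] (g : α → ℝ) (e : β → ℝ) (t : β → α → ℝ) :
    ∑ i, g i * (∑ j, e j * t j i) = ∑ j, e j * (∑ i, g i * t j i) := by
  simp only [Finset.mul_sum]
  rw [Finset.sum_comm]
  exact Finset.sum_congr rfl fun j _ => Finset.sum_congr rfl fun i _ => by ring

lemma bessel {k : ℕ} {ι : Type*} [Fintype ι] [DecidableEq ι] (u : ι → Fin k → ℝ)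
    (h : ∀ j l : ι, ∑ i, u j i * u l i = if j = l then 1 else 0) (a : Fin k → ℝ) :
    ∑ j : ι, (∑ i, a i * u j i) ^ 2 ≤ ∑ i, (a i) ^ 2 := by
  classical
  set c : ι → ℝ := fun j => ∑ i, a i * u j i with hc
  set b : Fin k → ℝ := fun i => ∑ j, c j * u j i with hb
  have hab : ∑ i, a i * b i = ∑ j, (c j) ^ 2 := by
    calc ∑ i, a i * b i = ∑ j, c j * (∑ i, a i * u j i) := swap_dot a c u
      _ = ∑ j, (c j) ^ 2 := Finset.sum_congr rfl fun j _ => by change c j * c j = _; ring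
  have hbu : ∀ j : ι, ∑ i, b i * u j i = c j := by
    intro j
    calc ∑ i, b i * u j i = ∑ i, u j i * b i := Finset.sum_congr rfl fun i _ => by ring
      _ = ∑ l, c l * (∑ i, u j i * u l i) := swap_dot (u j) c u
      _ = ∑ l, c l * (if j = l then 1 else 0) := by
          exact Finset.sum_congr rfl fun l _ => by rw [h j l]
      _ = c j := by simp [eq_comm]
  have hbb : ∑ i, (b i) ^ 2 = ∑ j, (c j) ^ 2 := by
    calc ∑ i, (b i) ^ 2 = ∑ i, b i * b i := Finset.sum_congr rfl fun i _ => by ring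
      _ = ∑ j, c j * (∑ i, b i * u j i) := swap_dot b c u
      _ = ∑ j, (c j) ^ 2 := Finset.sum_congr rfl fun j _ => by rw [hbu j]; ring
  have h0 : (0:ℝ) ≤ ∑ i, (a i - b i) ^ 2 := Finset.sum_nonneg fun i _ => sq_nonneg _
  have hexp : ∑ i, (a i - b i) ^ 2
      = ∑ i, (a i) ^ 2 - 2 * (∑ i, a i * b i) + ∑ i, (b i) ^ 2 := by
    rw [Finset.mul_sum, ← Finset.sum_sub_distrib, ← Finset.sum_add_distrib]
    exact Finset.sum_congr rfl fun i _ => by ring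
  rw [hexp, hab, hbb] at h0
  linarith

lemma parseval {D : ℕ} (v : Fin D → Fin D → ℝ)
    (h : ∀ m c : Fin D, ∑ j, v j m * v j c = if m = c then 1 else 0) (a : Fin D → ℝ) :
    ∑ j, (∑ c, a c * v j c) ^ 2 = ∑ c, (a c) ^ 2 := by
  set C : Fin D → ℝ := fun j => ∑ c, a c * v j c with hC
  have hin : ∀ c : Fin D, ∑ j, C j * v j c = a c := by
    intro c
    calc ∑ j, C j * v j c = ∑ j, v j c * C j := Finset.sum_congr rfl fun j _ => by ring
      _ = ∑ c', a c' * (∑ j, v j c * v j c') :=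
          swap_dot (fun j => v j c) a (fun c' j => v j c')
      _ = ∑ c', a c' * (if c = c' then 1 else 0) :=
          Finset.sum_congr rfl fun c' _ => by rw [h c c']
      _ = a c := by simp [eq_comm]
  calc ∑ j, (C j) ^ 2 = ∑ j, C j * C j := Finset.sum_congr rfl fun j _ => by ring
    _ = ∑ c, a c * (∑ j, C j * v j c) := swap_dot C a (fun c j => v j c)
    _ = ∑ c, (a c) ^ 2 := Finset.sum_congr rfl fun c _ => by rw [hin c]; ring

lemma key_sum {d : ℕ} {ι : Type*} [Fintype ι] [DecidableEq ι] (f : ι ↪ Fin d) (p q : ι → ℝ) :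
    ∑ r : Fin d, (∑ j, if f j = r then p j else 0) * (∑ l, if f l = r then q l else 0)
      = ∑ j, p j * q j := by
  classical
  rw [← Finset.sum_subset (Finset.subset_univ (Finset.univ.image f))
    (fun r _ hr => by
      have h : ∀ j : ι, ¬ (f j = r) := fun j hj =>
        hr (Finset.mem_image.mpr ⟨j, Finset.mem_univ _, hj⟩)
      simp [h])]
  rw [Finset.sum_image (fun a _ b _ h => f.injective h)]
  refine Finset.sum_congr rfl fun a _ => ?_
  simp [EmbeddingLike.apply_eq_iff_eq]

lemma two_mul_dot_le {n : ℕ} (g w : Fin n → ℝ) :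
    2 * ∑ r, w r * g r ≤ (∑ r, (g r) ^ 2) + ∑ r, (w r) ^ 2 := by
  have h0 : (0:ℝ) ≤ ∑ r, (g r - w r) ^ 2 := Finset.sum_nonneg fun r _ => sq_nonneg _
  have hexp : ∑ r, (g r - w r) ^ 2
      = ∑ r, (g r) ^ 2 - 2 * (∑ r, w r * g r) + ∑ r, (w r) ^ 2 := by
    rw [Finset.mul_sum, ← Finset.sum_sub_distrib, ← Finset.sum_add_distrib]
    exact Finset.sum_congr rfl fun r _ => by ring
  linarith [hexp ▸ h0]

lemma subtype_sum_eq {α : Type*} [Fintype α] (p : α → Prop) [DecidablePred p] (h : α → ℝ)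
    (hz : ∀ j, ¬ p j → h j = 0) : ∑ j : {j // p j}, h j.val = ∑ j, h j := by
  classical
  calc ∑ j : {j // p j}, h j.val
      = ∑ j ∈ Finset.univ.filter p, h j :=
        (Finset.sum_subtype (p := p) (Finset.univ.filter p) (by simp) h).symm
    _ = ∑ j, h j :=
        Finset.sum_filter_of_ne (fun x _ hx => by by_contra hp; exact hx (hz x hp))

lemma subtype_sum_le {α : Type*} [Fintype α] (p : α → Prop) [DecidablePred p] (h : α → ℝ)
    (hn : ∀ j, 0 ≤ h j) : ∑ j : {j // p j}, h j.val ≤ ∑ j, h j := by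
  classical
  rw [← Finset.sum_subtype (p := p) (Finset.univ.filter p) (by simp) h]
  exact Finset.sum_le_sum_of_subset_of_nonneg (Finset.filter_subset _ _)
    (fun x _ _ => hn x)

set_option maxHeartbeats 1000000 in
/-- Variational characterization of the nuclear norm via balanced two-layer
factorizations with a sufficiently large hidden dimension. -/
theorem stmt_8 {k D d : ℕ} (hd : min k D ≤ d) (Z : Matrix (Fin k) (Fin D) ℝ) :
    sInf {c : ℝ | ∃ (W2 : Matrix (Fin k) (Fin d) ℝ) (W1 : Matrix (Fin d) (Fin D) ℝ),
        Z = W2 * W1 ∧ c = (1 / 2) * (frobSq W1 + frobSq W2)} = nuclearNorm Z := by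
  classical
  have hA : (Zᵀ * Z).IsHermitian := by simpa using Matrix.isHermitian_conjTranspose_mul_self Z
  set μ : Fin D → ℝ := hA.eigenvalues with hμdef
  set V : Matrix (Fin D) (Fin D) ℝ := (hA.eigenvectorUnitary : Matrix (Fin D) (Fin D) ℝ) with hV
  set v : Fin D → Fin D → ℝ := fun j i => V i j with hv
  have heig : ∀ j : Fin D, (Zᵀ * Z) *ᵥ v j = μ j • v j := fun j => hA.mulVec_eigenvectorBasis j
  have hvcol : ∀ j l : Fin D, ∑ i, v j i * v l i = if j = l then 1 else 0 := by
    intro j l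
    have := congrFun (congrFun (Matrix.mem_unitaryGroup_iff'.mp hA.eigenvectorUnitary.2) j) l
    simpa [hv, hV, Matrix.mul_apply, Matrix.one_apply, mul_comm] using this
  have hvrow : ∀ m c : Fin D, ∑ j, v j m * v j c = if m = c then 1 else 0 := by
    intro m c
    have := congrFun (congrFun (Matrix.mem_unitaryGroup_iff.mp hA.eigenvectorUnitary.2) m) c
    simpa [hv, hV, Matrix.mul_apply, Matrix.one_apply] using this
  have hZv : ∀ j l : Fin D, ∑ i, (Z *ᵥ v j) i * (Z *ᵥ v l) i = if j = l then μ j else 0 := by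
    intro j l
    have h3 : (Z *ᵥ v j) ⬝ᵥ (Z *ᵥ v l) = v j ⬝ᵥ ((Zᵀ * Z) *ᵥ v l) := by
      conv_rhs => rw [← Matrix.mulVec_mulVec, Matrix.dotProduct_mulVec, Matrix.vecMul_transpose]
    have h4 : v j ⬝ᵥ ((Zᵀ * Z) *ᵥ v l) = μ l * (v j ⬝ᵥ v l) := by
      rw [heig l, dotProduct_smul]; rfl
    have h5 : v j ⬝ᵥ v l = if j = l then 1 else 0 := hvcol j l
    calc ∑ i, (Z *ᵥ v j) i * (Z *ᵥ v l) i = (Z *ᵥ v j) ⬝ᵥ (Z *ᵥ v l) := rfl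
      _ = μ l * (if j = l then 1 else 0) := by rw [h3, h4, h5]
      _ = if j = l then μ j else 0 := by split <;> simp_all
  have hμ0 : ∀ j, 0 ≤ μ j := by
    intro j
    have h1 := hZv j j
    simp only [if_true, eq_self_iff_true] at h1
    rw [← h1]
    exact Finset.sum_nonneg fun i _ => mul_self_nonneg _
  set σ : Fin D → ℝ := fun j => Real.sqrt (μ j) with hσdef
  have hσ0 : ∀ j, 0 ≤ σ j := fun j => Real.sqrt_nonneg _
  have hσsq : ∀ j, σ j ^ 2 = μ j := fun j => Real.sq_sqrt (hμ0 j)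
  have hnuc : nuclearNorm Z = ∑ j, σ j := rfl
  have hσzero : ∀ j, μ j = 0 → σ j = 0 := fun j h => by
    show Real.sqrt (μ j) = 0; rw [h, Real.sqrt_zero]
  have hZv0 : ∀ j : Fin D, μ j = 0 → Z *ᵥ v j = 0 := by
    intro j h
    have h1 := hZv j j
    simp only [if_true, eq_self_iff_true, h] at h1
    have h2 := (Finset.sum_eq_zero_iff_of_nonneg
      (fun i _ => mul_self_nonneg ((Z *ᵥ v j) i))).mp h1
    funext i
    exact mul_self_eq_zero.mp (h2 i (Finset.mem_univ i))
  -- the orthonormal family of left singular vectors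
  set u : {j : Fin D // μ j ≠ 0} → Fin k → ℝ := fun j i => (Z *ᵥ v j.val) i / σ j.val with hu
  have hσpos : ∀ j : {j : Fin D // μ j ≠ 0}, 0 < σ j.val := fun j =>
    Real.sqrt_pos.mpr (lt_of_le_of_ne (hμ0 j.val) (Ne.symm j.prop))
  have hσu : ∀ (j : {j : Fin D // μ j ≠ 0}) (i : Fin k),
      σ j.val * u j i = (Z *ᵥ v j.val) i := by
    intro j i
    show σ j.val * ((Z *ᵥ v j.val) i / σ j.val) = (Z *ᵥ v j.val) i
    rw [mul_comm]
    exact div_mul_cancel₀ _ (ne_of_gt (hσpos j))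
  have huorth : ∀ j l : {j : Fin D // μ j ≠ 0},
      ∑ i, u j i * u l i = if j = l then 1 else 0 := by
    intro j l
    have h1 : ∑ i, u j i * u l i
        = (∑ i, (Z *ᵥ v j.val) i * (Z *ᵥ v l.val) i) / (σ j.val * σ l.val) := by
      rw [Finset.sum_div]
      exact Finset.sum_congr rfl fun i _ => by
        show (Z *ᵥ v j.val) i / σ j.val * ((Z *ᵥ v l.val) i / σ l.val) = _
        ring
    rw [h1, hZv]
    by_cases hjl : j = l
    · subst hjl
      rw [if_pos rfl, if_pos rfl, ← hσsq j.val]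
      rw [sq]
      exact div_self (ne_of_gt (mul_pos (hσpos j) (hσpos j)))
    · have hne : j.val ≠ l.val := fun h => hjl (Subtype.ext h)
      rw [if_neg hne, if_neg hjl, zero_div]
  -- lower bound
  have hLB : ∀ (W2 : Matrix (Fin k) (Fin d) ℝ) (W1 : Matrix (Fin d) (Fin D) ℝ),
      Z = W2 * W1 → nuclearNorm Z ≤ (1 / 2) * (frobSq W1 + frobSq W2) := by
    intro W2 W1 hZ
    have hper : ∀ j : {j : Fin D // μ j ≠ 0},
        2 * σ j.val ≤ (∑ r, (∑ i, W2 i r * u j i) ^ 2) + (∑ r, ((W1 *ᵥ v j.val) r) ^ 2) := by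
      intro j
      set g : Fin d → ℝ := fun r => ∑ i, W2 i r * u j i with hg
      set w : Fin d → ℝ := fun r => (W1 *ᵥ v j.val) r with hw
      have e1 : σ j.val = ∑ i, u j i * (Z *ᵥ v j.val) i := by
        have e0 : ∑ i, u j i * (Z *ᵥ v j.val) i
            = (∑ i, (Z *ᵥ v j.val) i * (Z *ᵥ v j.val) i) / σ j.val := by
          rw [Finset.sum_div]
          exact Finset.sum_congr rfl fun i _ => by
            show (Z *ᵥ v j.val) i / σ j.val * ((Z *ᵥ v j.val) i) = _
            ring
        rw [e0, hZv j.val j.val, if_pos rfl, ← hσsq j.val, sq, mul_div_assoc,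
          div_self (ne_of_gt (hσpos j)), mul_one]
      have e2 : ∀ i, (Z *ᵥ v j.val) i = ∑ r, w r * W2 i r := by
        intro i
        rw [hZ, ← Matrix.mulVec_mulVec]
        show ∑ r, W2 i r * (W1 *ᵥ v j.val) r = ∑ r, w r * W2 i r
        exact Finset.sum_congr rfl fun r _ => by rw [hw]; ring
      have e3 : σ j.val = ∑ r, w r * g r := by
        rw [e1]
        calc ∑ i, u j i * (Z *ᵥ v j.val) i
            = ∑ i, u j i * (∑ r, w r * W2 i r) :=
              Finset.sum_congr rfl fun i _ => by rw [e2 i]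
          _ = ∑ r, w r * (∑ i, u j i * W2 i r) := swap_dot (u j) w (fun r i => W2 i r)
          _ = ∑ r, w r * g r := Finset.sum_congr rfl fun r _ => by
              rw [hg]
              exact congrArg _ (Finset.sum_congr rfl fun i _ => by ring)
      calc 2 * σ j.val = 2 * ∑ r, w r * g r := by rw [e3]
        _ ≤ (∑ r, (g r) ^ 2) + ∑ r, (w r) ^ 2 := two_mul_dot_le g w
    have hsum1 : ∑ j : {j : Fin D // μ j ≠ 0}, (∑ r, (∑ i, W2 i r * u j i) ^ 2)
        ≤ frobSq W2 := by
      rw [Finset.sum_comm]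
      calc ∑ r, ∑ j : {j : Fin D // μ j ≠ 0}, (∑ i, W2 i r * u j i) ^ 2
          ≤ ∑ r, ∑ i, (W2 i r) ^ 2 :=
            Finset.sum_le_sum fun r _ => bessel u huorth (fun i => W2 i r)
        _ = frobSq W2 := Finset.sum_comm
    have hsum2 : ∑ j : {j : Fin D // μ j ≠ 0}, (∑ r, ((W1 *ᵥ v j.val) r) ^ 2)
        ≤ frobSq W1 := by
      have h1 : ∑ j : {j : Fin D // μ j ≠ 0}, (∑ r, ((W1 *ᵥ v j.val) r) ^ 2)
          ≤ ∑ j : Fin D, ∑ r, ((W1 *ᵥ v j) r) ^ 2 :=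
        subtype_sum_le _ (fun j => ∑ r, ((W1 *ᵥ v j) r) ^ 2)
          (fun j => Finset.sum_nonneg fun r _ => sq_nonneg _)
      have h2 : ∑ j : Fin D, ∑ r, ((W1 *ᵥ v j) r) ^ 2 = frobSq W1 := by
        rw [Finset.sum_comm]
        calc ∑ r, ∑ j, ((W1 *ᵥ v j) r) ^ 2
            = ∑ r, ∑ c, (W1 r c) ^ 2 :=
              Finset.sum_congr rfl fun r _ => parseval v hvrow (W1 r)
          _ = frobSq W1 := rfl
      linarith
    have hnuc2 : nuclearNorm Z = ∑ j : {j : Fin D // μ j ≠ 0}, σ j.val := by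
      rw [hnuc]
      exact (subtype_sum_eq _ σ (fun j h => hσzero j (not_ne_iff.mp h))).symm
    have hsum := Finset.sum_le_sum (fun j (_ : j ∈ Finset.univ) => hper j)
    rw [Finset.sum_add_distrib, ← Finset.mul_sum] at hsum
    rw [hnuc2]
    linarith
  -- existence of an optimal factorization
  have hcard : Fintype.card {j : Fin D // μ j ≠ 0} ≤ d := by
    have h6 : (Zᵀ * Z).rank = Fintype.card {j : Fin D // μ j ≠ 0} :=
      hA.rank_eq_card_non_zero_eigs
    have h7 : (Zᵀ * Z).rank = Z.rank := Matrix.rank_transpose_mul_self Z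
    have h8 : Z.rank ≤ min k D := by
      have := Z.rank_le_card_width
      have := Z.rank_le_card_height
      simp only [Fintype.card_fin] at *
      omega
    omega
  obtain ⟨f⟩ : Nonempty ({j : Fin D // μ j ≠ 0} ↪ Fin d) :=
    Function.Embedding.nonempty_of_card_le (by simpa using hcard)
  set s : {j : Fin D // μ j ≠ 0} → ℝ := fun j => Real.sqrt (σ j.val) with hs
  have hssq : ∀ j, s j ^ 2 = σ j.val := fun j => Real.sq_sqrt (hσ0 j.val)
  set W2₀ : Matrix (Fin k) (Fin d) ℝ :=
    fun i r => ∑ j, if f j = r then s j * u j i else 0 with hW2₀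
  set W1₀ : Matrix (Fin d) (Fin D) ℝ :=
    fun r c => ∑ j, if f j = r then s j * v j.val c else 0 with hW1₀
  have hfact : Z = W2₀ * W1₀ := by
    funext i c
    rw [Matrix.mul_apply]
    calc Z i c = ∑ m, Z i m * (∑ j, v j c * v j m) := by
          have : ∀ m, (∑ j, v j c * v j m) = if c = m then 1 else 0 := fun m => hvrow c m
          simp only [this, mul_ite, mul_one, mul_zero]
          rw [Finset.sum_ite_eq Finset.univ c (Z i)]
          simp
      _ = ∑ j : Fin D, v j c * (∑ m, Z i m * v j m) :=
          (swap_dot (fun j => v j c) (Z i) (fun m j => v j m)).symm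
      _ = ∑ j : Fin D, (Z *ᵥ v j) i * v j c :=
          Finset.sum_congr rfl fun j _ => by
            show v j c * (∑ m, Z i m * v j m) = (∑ m, Z i m * v j m) * v j c
            ring
      _ = ∑ j : {j : Fin D // μ j ≠ 0}, (Z *ᵥ v j.val) i * v j.val c :=
          (subtype_sum_eq _ (fun j => (Z *ᵥ v j) i * v j c)
            (fun j h => by show (Z *ᵥ v j) i * v j c = 0; rw [hZv0 j (not_ne_iff.mp h)]; simp)).symm
      _ = ∑ j : {j : Fin D // μ j ≠ 0}, (s j * u j i) * (s j * v j.val c) :=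
          Finset.sum_congr rfl fun j _ => by
            rw [← hσu j i, ← hssq j]; ring
      _ = ∑ r, W2₀ i r * W1₀ r c := (key_sum f _ _).symm
  have hW1v : frobSq W1₀ = ∑ j : {j : Fin D // μ j ≠ 0}, σ j.val := by
    calc frobSq W1₀ = ∑ c, ∑ r, W1₀ r c * W1₀ r c := by
          rw [frobSq, Finset.sum_comm]
          exact Finset.sum_congr rfl fun c _ => Finset.sum_congr rfl fun r _ => sq (W1₀ r c)
      _ = ∑ c, ∑ j : {j : Fin D // μ j ≠ 0}, (s j * v j.val c) * (s j * v j.val c) :=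
          Finset.sum_congr rfl fun c _ => key_sum f _ _
      _ = ∑ j : {j : Fin D // μ j ≠ 0}, σ j.val * ∑ c, v j.val c * v j.val c := by
          rw [Finset.sum_comm]
          exact Finset.sum_congr rfl fun j _ => by
            rw [Finset.mul_sum]
            exact Finset.sum_congr rfl fun c _ => by rw [← hssq j]; ring
      _ = ∑ j : {j : Fin D // μ j ≠ 0}, σ j.val := by
          refine Finset.sum_congr rfl fun j _ => ?_
          rw [hvcol j.val j.val, if_pos rfl, mul_one]
  have hW2v : frobSq W2₀ = ∑ j : {j : Fin D // μ j ≠ 0}, σ j.val := by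
    calc frobSq W2₀ = ∑ i, ∑ r, W2₀ i r * W2₀ i r := by
          exact Finset.sum_congr rfl fun i _ => Finset.sum_congr rfl fun r _ => sq (W2₀ i r)
      _ = ∑ i, ∑ j : {j : Fin D // μ j ≠ 0}, (s j * u j i) * (s j * u j i) :=
          Finset.sum_congr rfl fun i _ => key_sum f _ _
      _ = ∑ j : {j : Fin D // μ j ≠ 0}, σ j.val * ∑ i, u j i * u j i := by
          rw [Finset.sum_comm]
          exact Finset.sum_congr rfl fun j _ => by
            rw [Finset.mul_sum]
            exact Finset.sum_congr rfl fun i _ => by rw [← hssq j]; ring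
      _ = ∑ j : {j : Fin D // μ j ≠ 0}, σ j.val := by
          refine Finset.sum_congr rfl fun j _ => ?_
          rw [huorth j j, if_pos rfl, mul_one]
  have hnuc2 : nuclearNorm Z = ∑ j : {j : Fin D // μ j ≠ 0}, σ j.val := by
    rw [hnuc]
    exact (subtype_sum_eq _ σ (fun j h => hσzero j (not_ne_iff.mp h))).symm
  have hmem : nuclearNorm Z ∈ {c : ℝ | ∃ (W2 : Matrix (Fin k) (Fin d) ℝ)
      (W1 : Matrix (Fin d) (Fin D) ℝ),
      Z = W2 * W1 ∧ c = (1 / 2) * (frobSq W1 + frobSq W2)} := by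
    exact ⟨W2₀, W1₀, hfact, by rw [hW1v, hW2v, hnuc2]; ring⟩
  apply le_antisymm
  · refine csInf_le ⟨nuclearNorm Z, ?_⟩ hmem
    rintro c ⟨W2, W1, h1, h2⟩
    rw [h2]; exact hLB W2 W1 h1
  · refine le_csInf ⟨_, hmem⟩ ?_
    rintro c ⟨W2, W1, h1, h2⟩
    rw [h2]; exact hLB W2 W1 h1
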